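/- For 1 ≤ k ≤ n−2, 1 ≤ p ≤ n−k−1, and q = n−p−k, the distance Laplacian spectrum of K(n,k,p) = K_k ▽ (K_p ∪ K_q) is {0, n+p+q, n with multiplicity k, n+q with multiplicity p−1, n+p with multiplicity q−1}. -/

import Mathlib

open Matrix BigOperators
open scoped Classical

/-- The spectral radius of a real square matrix: the largest modulus of a
(complex) eigenvalue. -/
noncomputable def specRad {n : Type*} [Fintype n] [DecidableEq n]
    (A : Matrix n n ℝ) : ℝ :=
  ⨆ μ : spectrum ℂ (A.map Complex.ofReal), ‖μ.val‖

/-- `reachIn A k u v` : there is a walk of length `k` from `u` to `v`. -/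
def reachIn {V : Type*} (A : V → V → Prop) : ℕ → V → V → Prop
  | 0 => fun u v => u = v
  | (k + 1) => fun u v => ∃ w, A u w ∧ reachIn A k w v

/-- The induced subgraph of `G` on the set `s` is connected: any two vertices of `s`
are joined by a walk staying inside `s`. -/
def ConnOn {V : Type*} (G : SimpleGraph V) (s : Set V) : Prop :=
  ∀ u ∈ s, ∀ v ∈ s, ∃ k : ℕ, reachIn (fun a b => G.Adj a b ∧ a ∈ s ∧ b ∈ s) k u v

/-- The graph has vertex connectivity `k`: deleting any fewer than `k` vertices leaves
a connected graph, and some set of `k` vertices disconnects it. -/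
def GVertexConnEq {V : Type*} [Fintype V] [DecidableEq V]
    (G : SimpleGraph V) (k : ℕ) : Prop :=
  (∀ S : Finset V, S.card < k → ConnOn G {v | v ∉ S}) ∧
  (∃ S : Finset V, S.card = k ∧ ¬ ConnOn G {v | v ∉ S})

/-- The graph `K(n,k,p) = K_k ▽ (K_p ∪ K_{n-p-k})`: vertices `0,…,p-1` form `K_p`,
vertices `p,…,p+k-1` form `K_k`, the rest form `K_{n-p-k}`; all pairs of distinct
vertices are adjacent except pairs with one vertex in `K_p` and the other in
`K_{n-p-k}`. -/
def Kgraph (n k p : ℕ) : SimpleGraph (Fin n) where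
  Adj u v := u ≠ v ∧
    ¬(((u : ℕ) < p ∧ p + k ≤ (v : ℕ)) ∨ ((v : ℕ) < p ∧ p + k ≤ (u : ℕ)))
  symm := ⟨by rintro u v ⟨h1, h2⟩; exact ⟨h1.symm, by tauto⟩⟩
  loopless := ⟨fun u h => h.1 rfl⟩

open Polynomial

/-- The distance matrix of `K(n,k,p)`: distance `2` between `K_p` and `K_{n-p-k}`,
distance `1` between any other pair of distinct vertices. -/
noncomputable def dMatKgraph (n k p : ℕ) : Matrix (Fin n) (Fin n) ℝ :=
  fun u v =>
    if u = v then 0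
    else if ((u : ℕ) < p ∧ p + k ≤ (v : ℕ)) ∨ ((v : ℕ) < p ∧ p + k ≤ (u : ℕ)) then 2
    else 1

/-- The distance Laplacian `𝓛 = Tr - 𝓓` of `K(n,k,p)`, with `Tr` the diagonal matrix
of transmissions (row sums of the distance matrix). -/
noncomputable def dLapKgraph (n k p : ℕ) : Matrix (Fin n) (Fin n) ℝ :=
  Matrix.diagonal (fun u => ∑ w, dMatKgraph n k p u w) - dMatKgraph n k p

section AuxDev
open Finset

namespace DLapAux

variable (n k p q : ℕ)

/-- separated pair (one in K_p, other in K_q) -/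
def sep (u w : ℕ) : Prop := (u < p ∧ p + k ≤ w) ∨ (w < p ∧ p + k ≤ u)

noncomputable def df (u w : ℕ) : ℝ := if u = w then 0 else if sep k p u w then 2 else 1

noncomputable def tf (u : ℕ) : ℝ :=
  if u < p then (n : ℝ) + q - 1 else if u < p + k then (n : ℝ) - 1 else (n : ℝ) + p - 1

def lead (u : ℕ) : ℕ := if u < p then 0 else if u < p + k then p else p + k

noncomputable def szf (w : ℕ) : ℝ := if w < p then (p : ℝ) else if w < p + k then (k : ℝ) else (q : ℝ)

noncomputable def cmf (u w : ℕ) : ℝ[X] :=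
  if u = w then X - C (tf n k p q u) else C (df k p u w)

noncomputable def Tf (u w : ℕ) : ℝ :=
  if w = u then 1 else if u ≠ lead k p u ∧ w = lead k p u then -1 else 0

noncomputable def Sf (u w : ℕ) : ℝ :=
  if u = w then 1 else if w = lead k p w ∧ lead k p u = w then 1 else 0

noncomputable def Rf (u b : ℕ) : ℝ[X] :=
  if u = lead k p u then cmf n k p q u b else cmf n k p q u b - cmf n k p q (lead k p u) b

noncomputable def Af (u w : ℕ) : ℝ[X] :=
  if u ≠ lead k p u then (if w = u then X - C (tf n k p q u + 1) else 0)
  else if w ≠ lead k p w then C (df k p u w)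
  else if u = w then X - C (tf n k p q u) + C (szf k p q w - 1)
  else C (szf k p q w * df k p u w)

section Basic
variable (hp1 : 1 ≤ p) (hk1 : 1 ≤ k)

lemma lead_le (u : ℕ) : lead k p u ≤ u := by
  unfold lead; split_ifs <;> omega

include hp1 hk1 in
lemma lead_idem (u : ℕ) : lead k p (lead k p u) = lead k p u := by
  unfold lead; split_ifs <;> omega

lemma lead_of_lt {u : ℕ} (h : u < p) : lead k p u = 0 := by unfold lead; split_ifs <;> omega
lemma lead_of_mid {u : ℕ} (h1 : p ≤ u) (h2 : u < p + k) : lead k p u = p := by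
  unfold lead; split_ifs <;> omega
lemma lead_of_ge {u : ℕ} (h : p + k ≤ u) : lead k p u = p + k := by
  unfold lead; split_ifs <;> omega

include hp1 hk1 in
/-- leaders are exactly 0, p, p+k -/
lemma lead_eq_self_iff (u : ℕ) : u = lead k p u ↔ (u = 0 ∨ u = p ∨ u = p + k) := by
  unfold lead; split_ifs <;> omega

include hp1 hk1 in
/-- `u` and `lead u` lie in the same block. -/
lemma lead_same_block (u : ℕ) :
    (u < p ↔ lead k p u < p) ∧ (p + k ≤ u ↔ p + k ≤ lead k p u) := by
  unfold lead; split_ifs <;> omega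

/-- df is 1 within a block -/
lemma df_same_block {u v : ℕ} (huv : u ≠ v)
    (h1 : u < p ↔ v < p) (h2 : p + k ≤ u ↔ p + k ≤ v) : df k p u v = 1 := by
  unfold df sep; split_ifs <;> first | rfl | omega

lemma df_congr_left {u v b : ℕ} (hub : u ≠ b) (hvb : v ≠ b)
    (h1 : u < p ↔ v < p) (h2 : p + k ≤ u ↔ p + k ≤ v) : df k p u b = df k p v b := by
  unfold df sep; split_ifs <;> first | rfl | omega

end Basic

end DLapAux

namespace DLapAux2

variable {M : Type*} [AddCommMonoid M]

lemma sum_block_const {a b : ℕ} (f : ℕ → M) (v : M)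
    (h : ∀ i, a ≤ i → i < b → f i = v) :
    ∑ i ∈ Ico a b, f i = (b - a) • v := by
  rw [Finset.sum_congr rfl (fun i hi => h i (mem_Ico.1 hi).1 (mem_Ico.1 hi).2),
    sum_const, Nat.card_Ico]

lemma sum_block_one {a b u : ℕ} (hu1 : a ≤ u) (hu2 : u < b) (f : ℕ → M) (v : M)
    (h : ∀ i, a ≤ i → i < b → i ≠ u → f i = v) :
    ∑ i ∈ Ico a b, f i = f u + (b - a - 1) • v := by
  rw [← Finset.add_sum_erase _ f (mem_Ico.2 ⟨hu1, hu2⟩)]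
  congr 1
  rw [Finset.sum_congr rfl (fun i hi => h i (mem_Ico.1 (mem_of_mem_erase hi)).1
    (mem_Ico.1 (mem_of_mem_erase hi)).2 (ne_of_mem_erase hi)), sum_const,
    card_erase_of_mem (mem_Ico.2 ⟨hu1, hu2⟩), Nat.card_Ico]

lemma sum_range_split {n kk pp : ℕ} (f : ℕ → M) (h1 : pp ≤ pp + kk) (h2 : pp + kk ≤ n) :
    ∑ i ∈ range n, f i
      = ∑ i ∈ Ico 0 pp, f i + ∑ i ∈ Ico pp (pp + kk), f i + ∑ i ∈ Ico (pp + kk) n, f i := by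
  rw [range_eq_Ico, ← Finset.sum_Ico_consecutive f (Nat.zero_le pp) (le_trans h1 h2),
    ← Finset.sum_Ico_consecutive f h1 h2, add_assoc]

lemma sum_two_support (s : Finset ℕ) (a b : ℕ) (hab : a ≠ b) (ha : a ∈ s) (hb : b ∈ s)
    (f : ℕ → M) (hf : ∀ i ∈ s, i ≠ a → i ≠ b → f i = 0) :
    ∑ i ∈ s, f i = f a + f b := by
  rw [← Finset.add_sum_erase _ f ha]
  congr 1
  rw [← Finset.add_sum_erase _ f (mem_erase.2 ⟨Ne.symm hab, hb⟩)]
  have : ∑ i ∈ (s.erase a).erase b, f i = 0 :=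
    Finset.sum_eq_zero fun i hi => hf i (mem_of_mem_erase (mem_of_mem_erase hi))
      (ne_of_mem_erase (mem_of_mem_erase hi)) (ne_of_mem_erase hi)
  rw [this, add_zero]

end DLapAux2
namespace DLapAux
open DLapAux2

variable (n k p q : ℕ)

lemma d_apply (u w : Fin n) : dMatKgraph n k p u w = df k p u.val w.val := by
  simp only [dMatKgraph, df, sep, Fin.ext_iff]
  split_ifs <;> first | rfl | exact (if_pos ‹_›).symm | exact (if_neg ‹_›).symm

section WithH
variable (hn : n = p + k + q) (hp1 : 1 ≤ p) (hk1 : 1 ≤ k) (hq1 : 1 ≤ q)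

include hn hp1 hk1 hq1 in
lemma trans_sum {u : ℕ} (hu : u < n) : ∑ i ∈ range n, df k p u i = tf n k p q u := by
  have hpk : p + k ≤ n := by omega
  rw [sum_range_split _ (by omega) hpk]
  have hnr : (n : ℝ) = p + k + q := by exact_mod_cast congrArg Nat.cast hn
  unfold tf
  rcases lt_or_ge u p with hup | hup
  · rw [sum_block_one (Nat.zero_le u) hup _ (1 : ℝ)
      (fun i _ hi hiu => by unfold df sep; split_ifs <;> first | rfl | omega)]
    rw [sum_block_const _ (1 : ℝ) (fun i hi1 hi2 => by unfold df sep; split_ifs <;> first | rfl | omega)]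
    rw [sum_block_const _ (2 : ℝ) (fun i hi1 hi2 => by unfold df sep; split_ifs <;> first | rfl | omega)]
    have : df k p u u = 0 := by unfold df; simp
    rw [this]
    rw [if_pos hup]
    simp only [nsmul_eq_mul]
    have e1 : p - 0 = p := by omega
    have e2 : p + k - p = k := by omega
    have e3 : n - (p + k) = q := by omega
    have e0 : ((p - 1 : ℕ) : ℝ) = (p : ℝ) - 1 := by push_cast [Nat.cast_sub hp1]; ring
    rw [e1, e2, e3, hnr, e0]; ring
  · rcases lt_or_ge u (p + k) with huk | huk
    · rw [sum_block_const _ (1 : ℝ) (fun i hi1 hi2 => by unfold df sep; split_ifs <;> first | rfl | omega)]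
      rw [sum_block_one hup huk _ (1 : ℝ)
        (fun i hi1 hi2 hiu => by unfold df sep; split_ifs <;> first | rfl | omega)]
      rw [sum_block_const _ (1 : ℝ) (fun i hi1 hi2 => by unfold df sep; split_ifs <;> first | rfl | omega)]
      have : df k p u u = 0 := by unfold df; simp
      rw [this]
      rw [if_neg (by omega), if_pos huk]
      simp only [nsmul_eq_mul]
      have e1 : p - 0 = p := by omega
      have e2 : p + k - p - 1 = k - 1 := by omega
      have e3 : n - (p + k) = q := by omega
      rw [e1, e2, e3, hnr]
      have e4 : ((k - 1 : ℕ) : ℝ) = (k : ℝ) - 1 := by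
        push_cast [Nat.cast_sub hk1]; ring
      rw [e4]; ring
    · rw [sum_block_const _ (2 : ℝ) (fun i hi1 hi2 => by unfold df sep; split_ifs <;> first | rfl | omega)]
      rw [sum_block_const _ (1 : ℝ) (fun i hi1 hi2 => by unfold df sep; split_ifs <;> first | rfl | omega)]
      rw [sum_block_one huk hu _ (1 : ℝ)
        (fun i hi1 hi2 hiu => by unfold df sep; split_ifs <;> first | rfl | omega)]
      have : df k p u u = 0 := by unfold df; simp
      rw [this]
      rw [if_neg (by omega), if_neg (by omega)]
      simp only [nsmul_eq_mul]
      have e1 : p - 0 = p := by omega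
      have e2 : p + k - p = k := by omega
      have e3 : n - (p + k) - 1 = q - 1 := by omega
      rw [e1, e2, e3, hnr]
      have e4 : ((q - 1 : ℕ) : ℝ) = (q : ℝ) - 1 := by
        push_cast [Nat.cast_sub hq1]; ring
      rw [e4]; ring

include hn hp1 hk1 hq1 in
lemma cm_apply (u w : Fin n) :
    charmatrix (dLapKgraph n k p) u w = cmf n k p q u.val w.val := by
  rcases eq_or_ne u w with rfl | huw
  · rw [charmatrix_apply_eq, cmf, if_pos rfl]
    congr 1
    have : dLapKgraph n k p u u = tf n k p q u.val := by
      simp only [dLapKgraph, Matrix.sub_apply, Matrix.diagonal_apply_eq]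
      have h0 : dMatKgraph n k p u u = 0 := by rw [d_apply, df, if_pos rfl]
      rw [h0, sub_zero]
      calc ∑ w, dMatKgraph n k p u w = ∑ w : Fin n, df k p u.val w.val :=
            Finset.sum_congr rfl fun w _ => d_apply n k p u w
        _ = ∑ i ∈ range n, df k p u.val i := Fin.sum_univ_eq_sum_range _ n
        _ = tf n k p q u.val := trans_sum n k p q hn hp1 hk1 hq1 u.isLt
    rw [this]
  · rw [charmatrix_apply_ne _ _ _ huw, cmf, if_neg (by simpa [Fin.ext_iff] using huw)]
    have : dLapKgraph n k p u w = -df k p u.val w.val := by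
      simp only [dLapKgraph, Matrix.sub_apply, Matrix.diagonal_apply_ne _ huw, d_apply,
        zero_sub]
    rw [this, map_neg, neg_neg]

end WithH
end DLapAux

namespace DLapAux
open DLapAux2

variable (n k p q : ℕ)

noncomputable def Tm : Matrix (Fin n) (Fin n) ℝ := Matrix.of fun u w => Tf k p u.val w.val
noncomputable def Sm : Matrix (Fin n) (Fin n) ℝ := Matrix.of fun u w => Sf k p u.val w.val
noncomputable def Rm : Matrix (Fin n) (Fin n) ℝ[X] :=
  Matrix.of fun u w => Rf n k p q u.val w.val
noncomputable def Am : Matrix (Fin n) (Fin n) ℝ[X] :=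
  Matrix.of fun u w => Af n k p q u.val w.val

section WithH2
variable (hn : n = p + k + q) (hp1 : 1 ≤ p) (hk1 : 1 ≤ k) (hq1 : 1 ≤ q)

include hn hp1 hk1 hq1 in
lemma step1 : (Tm n k p).map C * charmatrix (dLapKgraph n k p) = Rm n k p q := by
  refine Matrix.ext fun u w => ?_
  rw [Matrix.mul_apply]
  have hsum : ∀ a : Fin n, ((Tm n k p).map C) u a * charmatrix (dLapKgraph n k p) a w
      = (fun i => C (Tf k p u.val i) * cmf n k p q i w.val) a.val := by
    intro a
    rw [Matrix.map_apply, cm_apply n k p q hn hp1 hk1 hq1]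
    rfl
  rw [Finset.sum_congr rfl (fun a _ => hsum a),
    Fin.sum_univ_eq_sum_range (fun i => C (Tf k p u.val i) * cmf n k p q i w.val) n]
  by_cases hu : u.val = lead k p u.val
  · rw [Finset.sum_eq_single_of_mem u.val (mem_range.2 u.isLt)]
    · have : Tf k p u.val u.val = 1 := by unfold Tf; simp
      rw [this, _root_.map_one, one_mul, Rm, Matrix.of_apply, Rf, if_pos hu]
    · intro i _ hiu
      have : Tf k p u.val i = 0 := by
        unfold Tf
        rw [if_neg hiu, if_neg (by tauto)]
      rw [this, map_zero, zero_mul]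
  · have hlu : lead k p u.val < n := lt_of_le_of_lt (lead_le k p u.val) u.isLt
    rw [DLapAux2.sum_two_support (range n) u.val (lead k p u.val) (fun h => hu h)
      (mem_range.2 u.isLt) (mem_range.2 hlu)]
    · have h1 : Tf k p u.val u.val = 1 := by unfold Tf; simp
      have h2 : Tf k p u.val (lead k p u.val) = -1 := by
        unfold Tf
        rw [if_neg (fun h => hu h.symm), if_pos ⟨hu, rfl⟩]
      rw [h1, h2, _root_.map_one, one_mul, map_neg, _root_.map_one, neg_one_mul,
        Rm, Matrix.of_apply, Rf, if_neg hu, sub_eq_add_neg]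
    · intro i _ hi1 hi2
      have : Tf k p u.val i = 0 := by
        unfold Tf
        rw [if_neg hi1, if_neg (by tauto)]
      rw [this, map_zero, zero_mul]

include hk1 in
lemma tf_same_block {u v : ℕ} (h1 : u < p ↔ v < p) (h2 : p + k ≤ u ↔ p + k ≤ v) :
    tf n k p q u = tf n k p q v := by
  unfold tf; split_ifs <;> first | rfl | omega

include hp1 hk1 in
lemma block_iff_lead {i j : ℕ} (h : lead k p i = lead k p j) :
    (i < p ↔ j < p) ∧ (p + k ≤ i ↔ p + k ≤ j) := by
  unfold lead at h; split_ifs at h <;> omega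

include hp1 hk1 in
lemma Rf_nonlead {u b : ℕ} (hu : u ≠ lead k p u) :
    Rf n k p q u b = if b = u then X - C (tf n k p q u + 1)
      else if b = lead k p u then -(X - C (tf n k p q u + 1)) else 0 := by
  have hblk := lead_same_block k p hp1 hk1 u
  have hlu : lead k p u ≠ u := fun h => hu h.symm
  rw [Rf, if_neg hu]
  rcases eq_or_ne b u with rfl | hbu
  · rw [if_pos rfl, cmf, if_pos rfl, cmf, if_neg hlu,
      df_same_block k p hlu hblk.1.symm hblk.2.symm]
    rw [map_add, _root_.map_one]; ring
  · rw [if_neg hbu]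
    rcases eq_or_ne b (lead k p u) with rfl | hbl
    · rw [if_pos rfl, cmf, if_neg hu, cmf, if_pos rfl,
        df_same_block k p hu hblk.1 hblk.2,
        tf_same_block n k p q hk1 hblk.1.symm hblk.2.symm]
      rw [map_add, _root_.map_one]; ring
    · rw [if_neg hbl, cmf, if_neg (fun h => hbu h.symm), cmf, if_neg (fun h => hbl h.symm),
        df_congr_left k p (fun h => hbu h.symm) (fun h => hbl h.symm) hblk.1 hblk.2, sub_self]

end WithH2
end DLapAux

namespace DLapAux
open DLapAux2

variable (n k p q : ℕ)

lemma Sf_nonlead_col {b w : ℕ} (hw : w ≠ lead k p w) :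
    Sf k p b w = if b = w then 1 else 0 := by
  unfold Sf
  rcases eq_or_ne b w with rfl | hbw
  · simp
  · rw [if_neg hbw, if_neg (by tauto), if_neg hbw]

lemma Sf_lead_col {b w : ℕ} (hw : w = lead k p w) :
    Sf k p b w = if lead k p b = w then 1 else 0 := by
  unfold Sf
  rcases eq_or_ne b w with rfl | hbw
  · rw [if_pos rfl, if_pos hw.symm]
  · rw [if_neg hbw]
    by_cases hlb : lead k p b = w
    · rw [if_pos ⟨hw, hlb⟩, if_pos hlb]
    · rw [if_neg (by tauto), if_neg hlb]

lemma df_symm (u w : ℕ) : df k p u w = df k p w u := by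
  unfold df sep
  split_ifs <;> first | rfl | omega

lemma cmf_diag (u : ℕ) : cmf n k p q u u = X - C (tf n k p q u) := if_pos rfl

section WithH3
variable (hn : n = p + k + q) (hp1 : 1 ≤ p) (hk1 : 1 ≤ k) (hq1 : 1 ≤ q)

include hn hp1 hk1 hq1 in
/-- characterization of the block of a leader `w` as an interval `Ico w hi`. -/
lemma block_interval {w : ℕ} (hw : w = 0 ∨ w = p ∨ w = p + k) :
    ∃ hi : ℕ, ((range n).filter fun i => lead k p i = w) = Ico w hi
      ∧ w < hi ∧ hi ≤ n ∧ ((hi - w : ℕ) : ℝ) = szf k p q w := by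
  rcases hw with h | h | h
  · refine ⟨p, ?_, by omega, by omega, ?_⟩
    · ext i
      simp only [mem_filter, mem_range, mem_Ico]
      unfold lead; split_ifs <;> omega
    · rw [szf, if_pos (show w < p by omega), h, Nat.sub_zero]
  · refine ⟨p + k, ?_, by omega, by omega, ?_⟩
    · ext i
      simp only [mem_filter, mem_range, mem_Ico]
      unfold lead; split_ifs <;> omega
    · rw [szf, if_neg (by omega), if_pos (by omega), h, Nat.add_sub_cancel_left]
  · refine ⟨n, ?_, by omega, le_refl n, ?_⟩
    · ext i
      simp only [mem_filter, mem_range, mem_Ico]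
      unfold lead; split_ifs <;> omega
    · rw [szf, if_neg (by omega), if_neg (by omega), h]
      have h2 : n - (p + k) = q := by omega
      rw [h2]

include hn hp1 hk1 hq1 in
lemma step2 : Rm n k p q * (Sm n k p).map C = Am n k p q := by
  refine Matrix.ext fun u w => ?_
  rw [Matrix.mul_apply]
  have hsum : ∀ a : Fin n, Rm n k p q u a * ((Sm n k p).map C) a w
      = (fun i => Rf n k p q u.val i * C (Sf k p i w.val)) a.val := fun a => rfl
  rw [Finset.sum_congr rfl (fun a _ => hsum a),
    Fin.sum_univ_eq_sum_range (fun i => Rf n k p q u.val i * C (Sf k p i w.val)) n]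
  by_cases hu : u.val = lead k p u.val
  · by_cases hw : w.val = lead k p w.val
    · -- leader row, leader column
      have hstep : ∀ i, Rf n k p q u.val i * C (Sf k p i w.val)
          = if lead k p i = w.val then cmf n k p q u.val i else 0 := by
        intro i
        rw [Rf, if_pos hu, Sf_lead_col k p hw]
        split_ifs <;> simp
      rw [Finset.sum_congr rfl (fun i _ => hstep i), ← Finset.sum_filter]
      obtain ⟨hi, hset, hwhi, hhin, hcard⟩ := block_interval n k p q hn hp1 hk1 hq1
        ((lead_eq_self_iff k p hp1 hk1 w.val).1 hw)
      rw [hset]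
      have hblockmem : ∀ i, w.val ≤ i → i < hi → lead k p i = w.val := by
        intro i h1 h2
        have : i ∈ ((range n).filter fun i => lead k p i = w.val) := by
          rw [hset]; exact mem_Ico.2 ⟨h1, h2⟩
        exact (mem_filter.1 this).2
      rw [Am, Matrix.of_apply, Af, if_neg (by simpa using hu), if_neg (by simpa using hw)]
      rcases eq_or_ne u.val w.val with heq | hne
      · -- diagonal corner entry
        rw [if_pos heq]
        rw [DLapAux2.sum_block_one (le_of_eq heq.symm) (heq ▸ hwhi)
          (cmf n k p q u.val) (C 1) ?side]
        case side =>
          intro i h1 h2 hiu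
          have hlu : lead k p i = lead k p u.val := by
            rw [hblockmem i h1 h2, ← heq]; exact hu
          have hblk := block_iff_lead k p hp1 hk1 hlu
          rw [cmf, if_neg (fun h => hiu h.symm),
            df_same_block k p (fun h => hiu h.symm) hblk.1.symm hblk.2.symm]
        rw [cmf_diag]
        have hsmul : (hi - w.val - 1) • (C (1:ℝ)) = C (szf k p q w.val - 1) := by
          rw [nsmul_eq_mul, ← Polynomial.C_eq_natCast, ← _root_.map_mul]
          congr 1
          have h1 : 1 ≤ hi - w.val := by omega
          rw [mul_one, ← hcard, Nat.cast_sub h1, Nat.cast_one]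
        rw [hsmul]
      · -- off-diagonal corner entry
        rw [if_neg hne]
        have hval : ∀ i, w.val ≤ i → i < hi → cmf n k p q u.val i
            = C (df k p u.val w.val) := by
          intro i h1 h2
          have hlw : lead k p i = lead k p w.val := by rw [hblockmem i h1 h2, ← hw]
          have hblk := block_iff_lead k p hp1 hk1 hlw
          have hiu : i ≠ u.val := by
            intro h
            rw [← h] at hu
            exact hne ((hblockmem i h1 h2) ▸ hu ▸ h ▸ rfl)
          rw [cmf, if_neg (fun h => hiu h.symm)]
          congr 1
          rw [df_symm k p u.val i, df_symm k p u.val w.val]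
          exact df_congr_left k p hiu (fun h => hne h.symm) hblk.1 hblk.2
        rw [DLapAux2.sum_block_const (cmf n k p q u.val) (C (df k p u.val w.val)) hval]
        rw [nsmul_eq_mul, ← Polynomial.C_eq_natCast, hcard, ← _root_.map_mul]
    · -- leader row, non-leader column
      rw [Finset.sum_eq_single_of_mem w.val (mem_range.2 w.isLt)]
      · rw [Sf, if_pos rfl, _root_.map_one, mul_one, Rf, if_pos hu, cmf,
          if_neg (by intro h; rw [h] at hu; exact hw (hu.symm ▸ hu)), Am, Matrix.of_apply, Af,
          if_neg (by simpa using hu), if_pos (by simpa using hw)]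
      · intro i _ hiw
        rw [Sf_nonlead_col k p (fun h => hw h), if_neg hiw, map_zero, mul_zero]
  · -- non-leader row
    have hlu : lead k p u.val < n := lt_of_le_of_lt (lead_le k p u.val) u.isLt
    have hRf : ∀ b, Rf n k p q u.val b = if b = u.val then X - C (tf n k p q u.val + 1)
        else if b = lead k p u.val then -(X - C (tf n k p q u.val + 1)) else 0 :=
      fun b => Rf_nonlead n k p q hp1 hk1 (fun h => hu h)
    have hAf : Am n k p q u w = if w.val = u.val then X - C (tf n k p q u.val + 1) else 0 := by
      rw [Am, Matrix.of_apply, Af, if_pos (by simpa using hu)]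
    by_cases hw : w.val = lead k p w.val
    · -- non-leader row, leader column: zero
      rw [DLapAux2.sum_two_support (range n) u.val (lead k p u.val) (fun h => hu h)
        (mem_range.2 u.isLt) (mem_range.2 hlu) _ ?zeros]
      case zeros =>
        intro i _ h1 h2
        rw [hRf, if_neg h1, if_neg h2, zero_mul]
      rw [hRf, if_pos rfl, hRf, if_neg (fun h => hu h.symm), if_pos rfl]
      rw [Sf_lead_col k p hw, Sf_lead_col k p hw, lead_idem k p hp1 hk1]
      have hne' : ¬ (w.val = u.val) := by intro h; rw [h] at hw; exact hu hw
      rw [hAf, if_neg hne']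
      ring
    · -- non-leader row, non-leader column
      rw [Finset.sum_eq_single_of_mem w.val (mem_range.2 w.isLt)]
      · rw [Sf, if_pos rfl, _root_.map_one, mul_one, hRf, hAf]
        have hwlu : w.val ≠ lead k p u.val := by
          intro h
          apply hw
          rw [h, lead_idem k p hp1 hk1]
        rcases eq_or_ne w.val u.val with heq | hne
        · rw [if_pos heq, if_pos heq]
        · rw [if_neg hne, if_neg hne, if_neg hwlu]
      · intro i _ hiw
        rw [Sf_nonlead_col k p (fun h => hw h), if_neg hiw, map_zero, mul_zero]

end WithH3
end DLapAux

namespace DLapAux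
open DLapAux2

variable {M' : Type*} [CommMonoid M']

lemma prod_block_const {a b : ℕ} (f : ℕ → M') (v : M')
    (h : ∀ i, a ≤ i → i < b → f i = v) :
    ∏ i ∈ Ico a b, f i = v ^ (b - a) := by
  rw [Finset.prod_congr rfl (fun i hi => h i (mem_Ico.1 hi).1 (mem_Ico.1 hi).2),
    prod_const, Nat.card_Ico]

lemma prod_block_one {a b u : ℕ} (hu1 : a ≤ u) (hu2 : u < b) (f : ℕ → M') (v : M')
    (h : ∀ i, a ≤ i → i < b → i ≠ u → f i = v) :
    ∏ i ∈ Ico a b, f i = f u * v ^ (b - a - 1) := by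
  rw [← Finset.mul_prod_erase _ f (mem_Ico.2 ⟨hu1, hu2⟩)]
  congr 1
  rw [Finset.prod_congr rfl (fun i hi => h i (mem_Ico.1 (mem_of_mem_erase hi)).1
    (mem_Ico.1 (mem_of_mem_erase hi)).2 (ne_of_mem_erase hi)), prod_const,
    card_erase_of_mem (mem_Ico.2 ⟨hu1, hu2⟩), Nat.card_Ico]

lemma prod_range_split {n kk pp : ℕ} (f : ℕ → M') (h1 : pp ≤ pp + kk) (h2 : pp + kk ≤ n) :
    ∏ i ∈ range n, f i
      = (∏ i ∈ Ico 0 pp, f i) * (∏ i ∈ Ico pp (pp + kk), f i) * ∏ i ∈ Ico (pp + kk) n, f i := by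
  rw [range_eq_Ico, ← Finset.prod_Ico_consecutive f (Nat.zero_le pp) (le_trans h1 h2),
    ← Finset.prod_Ico_consecutive f h1 h2, mul_assoc]

variable (n k p q : ℕ)

lemma Tm_det : (Tm n k p).det = 1 := by
  rw [Matrix.det_of_lowerTriangular (Tm n k p) ?tri]
  case tri =>
    intro u w hlt
    have hwu : (u : ℕ) < (w : ℕ) := OrderDual.toDual_lt_toDual.mp hlt
    rw [Tm, Matrix.of_apply, Tf, if_neg (by omega : ¬ (w:ℕ) = (u:ℕ)),
      if_neg (by intro hc; have := lead_le k p u.val; omega)]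
  exact Finset.prod_eq_one fun u _ => by rw [Tm, Matrix.of_apply, Tf, if_pos rfl]

lemma Sm_det : (Sm n k p).det = 1 := by
  rw [Matrix.det_of_lowerTriangular (Sm n k p) ?tri]
  case tri =>
    intro u w hlt
    have hwu : (u : ℕ) < (w : ℕ) := OrderDual.toDual_lt_toDual.mp hlt
    rw [Sm, Matrix.of_apply, Sf, if_neg (by omega : ¬ (u:ℕ) = (w:ℕ)),
      if_neg (by intro hc; have := lead_le k p u.val; omega)]
  exact Finset.prod_eq_one fun u _ => by rw [Sm, Matrix.of_apply, Sf, if_pos rfl]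

section WithH4
variable (hn : n = p + k + q) (hp1 : 1 ≤ p) (hk1 : 1 ≤ k) (hq1 : 1 ≤ q)

include hn hp1 hk1 hq1

lemma Af_eval00 : Af n k p q 0 0 = X - C ((n:ℝ) + q - 1) + C ((p:ℝ) - 1) := by
  unfold Af lead tf szf df sep; split_ifs <;> first | rfl | omega

lemma Af_eval01 : Af n k p q 0 p = C ((k:ℝ) * 1) := by
  unfold Af lead tf szf df sep; split_ifs <;> first | rfl | omega

lemma Af_eval02 : Af n k p q 0 (p + k) = C ((q:ℝ) * 2) := by
  unfold Af lead tf szf df sep; split_ifs <;> first | rfl | omega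

lemma Af_eval10 : Af n k p q p 0 = C ((p:ℝ) * 1) := by
  unfold Af lead tf szf df sep; split_ifs <;> first | rfl | omega

lemma Af_eval11 : Af n k p q p p = X - C ((n:ℝ) - 1) + C ((k:ℝ) - 1) := by
  unfold Af lead tf szf df sep; split_ifs <;> first | rfl | omega

lemma Af_eval12 : Af n k p q p (p + k) = C ((q:ℝ) * 1) := by
  unfold Af lead tf szf df sep; split_ifs <;> first | rfl | omega

lemma Af_eval20 : Af n k p q (p + k) 0 = C ((p:ℝ) * 2) := by
  unfold Af lead tf szf df sep; split_ifs <;> first | rfl | omega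

lemma Af_eval21 : Af n k p q (p + k) p = C ((k:ℝ) * 1) := by
  unfold Af lead tf szf df sep; split_ifs <;> first | rfl | omega

lemma Af_eval22 : Af n k p q (p + k) (p + k) = X - C ((n:ℝ) + p - 1) + C ((q:ℝ) - 1) := by
  unfold Af lead tf szf df sep; split_ifs <;> first | rfl | omega

lemma corner_det :
    ((Am n k p q).toSquareBlockProp (fun a : Fin n => (a : ℕ) = lead k p (a : ℕ))).det
      = X * (X - C ((n:ℝ) + p + q)) * (X - C (n:ℝ)) := by
  have h0n : 0 < n := by omega
  have hpn : p < n := by omega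
  have hpkn : p + k < n := by omega
  have h0n : 0 < n := by omega
  have hpn : p < n := by omega
  have hpkn : p + k < n := by omega
  set P : Fin n → Prop := fun a : Fin n => (a : ℕ) = lead k p (a : ℕ) with hP
  have hl0 : P ⟨0, h0n⟩ := by simp only [hP]; rw [lead_of_lt k p (by omega : (0:ℕ) < p)]
  have hl1 : P ⟨p, hpn⟩ := by
    simp only [hP]; rw [lead_of_mid k p (le_refl p) (by omega)]
  have hl2 : P ⟨p + k, hpkn⟩ := by
    simp only [hP]; rw [lead_of_ge k p (le_refl (p + k))]
  set g : Fin 3 → {a : Fin n // P a} := fun i =>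
    if (i : ℕ) = 0 then ⟨⟨0, h0n⟩, hl0⟩ else if (i : ℕ) = 1 then ⟨⟨p, hpn⟩, hl1⟩
      else ⟨⟨p + k, hpkn⟩, hl2⟩
    with hg
  have hg0 : g 0 = ⟨⟨0, h0n⟩, hl0⟩ := by rw [hg]; norm_num
  have hg1 : g 1 = ⟨⟨p, hpn⟩, hl1⟩ := by rw [hg]; norm_num
  have hg2 : g 2 = ⟨⟨p + k, hpkn⟩, hl2⟩ := by rw [hg]; norm_num
  have hgv : ∀ i : Fin 3, ((g i).val : ℕ)
      = if (i : ℕ) = 0 then 0 else if (i : ℕ) = 1 then p else p + k := by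
    intro i
    simp only [hg]
    split_ifs <;> rfl
  have hval : ∀ a : {a : Fin n // P a},
      ((a.val : Fin n) : ℕ) = 0 ∨ ((a.val : Fin n) : ℕ) = p ∨ ((a.val : Fin n) : ℕ) = p + k :=
    fun a => (lead_eq_self_iff k p hp1 hk1 _).1 a.2
  have hbij : Function.Bijective g := by
    constructor
    · intro a b hab
      have hab' := congrArg (fun x : {a : Fin n // P a} => ((x.val : Fin n) : ℕ)) hab
      simp only [hgv] at hab'
      have ha := a.isLt
      have hb := b.isLt
      apply Fin.ext
      split_ifs at hab' <;> omega
    · intro a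
      rcases hval a with h | h | h
      · exact ⟨0, by rw [hg0]; exact (Subtype.ext (Fin.ext h.symm))⟩
      · exact ⟨1, by rw [hg1]; exact (Subtype.ext (Fin.ext h.symm))⟩
      · exact ⟨2, by rw [hg2]; exact (Subtype.ext (Fin.ext h.symm))⟩
  set e3 : Fin 3 ≃ {a : Fin n // P a} := Equiv.ofBijective g hbij with he3
  rw [← Matrix.det_submatrix_equiv_self e3]
  have hM : ∀ i j : Fin 3,
      (((Am n k p q).toSquareBlockProp P).submatrix e3 e3) i j
        = Af n k p q ((g i).val : ℕ) ((g j).val : ℕ) := by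
    intro i j
    rfl
  rw [show ((Am n k p q).toSquareBlockProp P).submatrix e3 e3
      = Matrix.of (fun i j : Fin 3 => Af n k p q ((g i).val : ℕ) ((g j).val : ℕ)) from
      Matrix.ext hM, Matrix.det_fin_three]
  simp only [Matrix.of_apply, hg0, hg1, hg2]
  rw [Af_eval00 n k p q hn hp1 hk1 hq1, Af_eval01 n k p q hn hp1 hk1 hq1,
    Af_eval02 n k p q hn hp1 hk1 hq1, Af_eval10 n k p q hn hp1 hk1 hq1,
    Af_eval11 n k p q hn hp1 hk1 hq1, Af_eval12 n k p q hn hp1 hk1 hq1,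
    Af_eval20 n k p q hn hp1 hk1 hq1, Af_eval21 n k p q hn hp1 hk1 hq1,
    Af_eval22 n k p q hn hp1 hk1 hq1]
  have hnr : (n : ℝ) = (p : ℝ) + k + q := by exact_mod_cast congrArg Nat.cast hn
  rw [hnr]
  simp only [map_add, map_sub, _root_.map_mul, _root_.map_one, map_ofNat]
  ring


end WithH4
end DLapAux

namespace DLapAux
open DLapAux2

variable (n k p q : ℕ)

section WithH5
variable (hn : n = p + k + q) (hp1 : 1 ≤ p) (hk1 : 1 ≤ k) (hq1 : 1 ≤ q)

include hn hp1 hk1 hq1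

lemma diag_det :
    ((Am n k p q).toSquareBlockProp (fun a : Fin n => ¬ ((a : ℕ) = lead k p (a : ℕ)))).det
      = (X - C ((n:ℝ) + q)) ^ (p - 1) * (X - C (n:ℝ)) ^ (k - 1)
        * (X - C ((n:ℝ) + p)) ^ (q - 1) := by
  have hdiag : (Am n k p q).toSquareBlockProp (fun a : Fin n => ¬ ((a : ℕ) = lead k p (a : ℕ)))
      = Matrix.diagonal (fun a : {a : Fin n // ¬ ((a : ℕ) = lead k p (a : ℕ))} =>
          X - C (tf n k p q ((a.val : Fin n) : ℕ) + 1)) := by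
    refine Matrix.ext fun a b => ?_
    rcases eq_or_ne a b with rfl | hab
    · rw [Matrix.diagonal_apply_eq]
      show Af n k p q ((a.val : Fin n) : ℕ) ((a.val : Fin n) : ℕ) = _
      rw [Af, if_pos a.2, if_pos rfl]
    · rw [Matrix.diagonal_apply_ne _ hab]
      show Af n k p q ((a.val : Fin n) : ℕ) ((b.val : Fin n) : ℕ) = 0
      rw [Af, if_pos a.2, if_neg (fun h => hab (Subtype.ext (Fin.ext h)).symm)]
  rw [hdiag, Matrix.det_diagonal]
  rw [← Finset.prod_subtype
    (Finset.univ.filter (fun a : Fin n => ¬ ((a : ℕ) = lead k p (a : ℕ))))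
    (fun a => by simp) (fun a : Fin n => X - C (tf n k p q (a : ℕ) + 1))]
  rw [Finset.prod_filter]
  rw [Fin.prod_univ_eq_prod_range
    (fun i => if ¬ (i = lead k p i) then X - C (tf n k p q i + 1) else 1) n]
  rw [prod_range_split _ (by omega : p ≤ p + k) (by omega : p + k ≤ n)]
  rw [prod_block_one (Nat.zero_le 0) (by omega : 0 < p) _ (X - C ((n:ℝ) + q)) ?v1]
  case v1 =>
    intro i _ hi2 hi0
    rw [if_pos (by rw [lead_of_lt k p hi2]; exact hi0), tf, if_pos hi2]
    norm_num
  rw [prod_block_one (le_refl p) (by omega : p < p + k) _ (X - C ((n:ℝ))) ?v2]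
  case v2 =>
    intro i hi1 hi2 hip
    rw [if_pos (by rw [lead_of_mid k p hi1 hi2]; exact fun h => hip h), tf,
      if_neg (by omega), if_pos hi2]
    norm_num
  rw [prod_block_one (le_refl (p + k)) (by omega : p + k < n) _ (X - C ((n:ℝ) + p)) ?v3]
  case v3 =>
    intro i hi1 _ hipk
    rw [if_pos (by rw [lead_of_ge k p hi1]; exact fun h => hipk h), tf,
      if_neg (by omega), if_neg (by omega)]
    norm_num
  have hf1 : (if ¬ ((0:ℕ) = lead k p 0) then X - C (tf n k p q 0 + 1) else 1) = 1 := by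
    rw [if_neg (by rw [lead_of_lt k p (by omega : (0:ℕ) < p)]; exact fun h => h rfl)]
  have hf2 : (if ¬ ((p:ℕ) = lead k p p) then X - C (tf n k p q p + 1) else 1) = 1 := by
    rw [if_neg (by rw [lead_of_mid k p (le_refl p) (by omega)]; exact fun h => h rfl)]
  have hf3 : (if ¬ ((p+k:ℕ) = lead k p (p+k)) then X - C (tf n k p q (p+k) + 1) else 1) = 1 := by
    rw [if_neg (by rw [lead_of_ge k p (le_refl (p+k))]; exact fun h => h rfl)]
  rw [hf1, hf2, hf3]
  have e1 : p - 0 - 1 = p - 1 := by omega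
  have e2 : p + k - p - 1 = k - 1 := by omega
  have e3 : n - (p + k) - 1 = q - 1 := by omega
  rw [e1, e2, e3]
  ring

lemma Am_block_zero : ∀ i : Fin n, ¬ ((i : ℕ) = lead k p (i : ℕ))
    → ∀ j : Fin n, ((j : ℕ) = lead k p (j : ℕ)) → Am n k p q i j = 0 := by
  intro i hi j hj
  rw [Am, Matrix.of_apply, Af, if_pos hi,
    if_neg (by intro h; exact hi (h ▸ hj))]

lemma charpoly_eq :
    (dLapKgraph n k p).charpoly
      = X * (X - C ((n : ℝ) + p + q)) * (X - C (n : ℝ)) ^ k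
        * (X - C ((n : ℝ) + q)) ^ (p - 1) * (X - C ((n : ℝ) + p)) ^ (q - 1) := by
  have h1 : Am n k p q = (Tm n k p).map C * charmatrix (dLapKgraph n k p) * (Sm n k p).map C := by
    rw [step1 n k p q hn hp1 hk1 hq1, step2 n k p q hn hp1 hk1 hq1]
  have hT : ((Tm n k p).map C).det = 1 := by
    rw [← RingHom.mapMatrix_apply, ← RingHom.map_det, Tm_det, Polynomial.C_1]
  have hS : ((Sm n k p).map C).det = 1 := by
    rw [← RingHom.mapMatrix_apply, ← RingHom.map_det, Sm_det, Polynomial.C_1]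
  have h2 : (dLapKgraph n k p).charpoly = (Am n k p q).det := by
    rw [h1, Matrix.det_mul, Matrix.det_mul, hT, hS, one_mul, mul_one]
    rfl
  rw [h2, Matrix.twoBlockTriangular_det (Am n k p q)
    (fun a : Fin n => (a : ℕ) = lead k p (a : ℕ)) (Am_block_zero n k p q hn hp1 hk1 hq1),
    corner_det n k p q hn hp1 hk1 hq1, diag_det n k p q hn hp1 hk1 hq1]
  obtain ⟨j, rfl⟩ : ∃ j, k = j + 1 := ⟨k - 1, by omega⟩
  have ej : j + 1 - 1 = j := rfl
  rw [ej, pow_succ]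
  ring

end WithH5
end DLapAux


end AuxDev

/-- For `1 ≤ k ≤ n-2`, `1 ≤ p ≤ n-k-1` and `q = n-p-k`, the distance
Laplacian spectrum of `K(n,k,p) = K_k ▽ (K_p ∪ K_q)` is
`{0, n+p+q, n^{[k]}, (n+q)^{[p-1]}, (n+p)^{[q-1]}}`, via the characteristic
polynomial. -/
theorem distLap_spectrum_Kgraph (n k p q : ℕ) (hk1 : 1 ≤ k) (hk2 : k ≤ n - 2)
    (hp1 : 1 ≤ p) (hp2 : p ≤ n - k - 1) (hq : q = n - p - k) :
    (dLapKgraph n k p).charpoly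
      = X * (X - C ((n : ℝ) + p + q)) * (X - C (n : ℝ)) ^ k
        * (X - C ((n : ℝ) + q)) ^ (p - 1) * (X - C ((n : ℝ) + p)) ^ (q - 1) := by
  have hn : n = p + k + q := by omega
  have hq1 : 1 ≤ q := by omega
  exact DLapAux.charpoly_eq n k p q hn hp1 hk1 hq1
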